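/- arXiv:1509.06543 — 2 statements merged into one kernel-verified Lean document; each statement's English description precedes it below -/
import Mathlib

section
/- Let U be a unitary operator on ℂ^n ⊗ ℂ^k such that for every density matrix β ∈ M_k^{1,+}(ℂ) there exists a unitary V_β on ℂ^n with L_{U,β}(ρ) = V_β ρ V_β* for all density matrices ρ ∈ M_n^{1,+}(ℂ). Then there exist unitaries V on ℂ^n and W on ℂ^k such that U = V ⊗ W. Conversely, every product unitary V ⊗ W has this property; hence U_aut = {V ⊗ W : V ∈ U_n, W ∈ U_k}. -/
open Matrix Kronecker ComplexOrder

noncomputable section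

namespace BipartiteUnitary

/-- A square complex matrix is unitary. -/
def IsUnitary {m : Type*} [Fintype m] [DecidableEq m] (U : Matrix m m ℂ) : Prop :=
  U * Uᴴ = 1 ∧ Uᴴ * U = 1

/-- A density matrix: positive semidefinite with unit trace. -/
def IsDensity {m : Type*} [Fintype m] (β : Matrix m m ℂ) : Prop :=
  β.PosSemidef ∧ β.trace = 1

/-- Partial trace over the second tensor factor. -/
def trB {n k : Type*} [Fintype k] (M : Matrix (n × k) (n × k) ℂ) : Matrix n n ℂ :=
  fun i j => ∑ s, M (i, s) (j, s)

/-- Partial trace over the first tensor factor. -/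
def trA {n k : Type*} [Fintype n] (M : Matrix (n × k) (n × k) ℂ) : Matrix k k ℂ :=
  fun s t => ∑ i, M (i, s) (i, t)

/-- The quantum channel `L_{U,β}(X) = Tr_B (U (X ⊗ β) U*)`. -/
def channel {n k : Type*} [Fintype n] [Fintype k]
    (U : Matrix (n × k) (n × k) ℂ) (β : Matrix k k ℂ) (X : Matrix n n ℂ) :
    Matrix n n ℂ :=
  trB (U * (X ⊗ₖ β) * Uᴴ)

/-- The partial transpose `X^Γ = (id ⊗ t)(X)` with respect to the second factor. -/
def pt {n k : Type*} (U : Matrix (n × k) (n × k) ℂ) : Matrix (n × k) (n × k) ℂ :=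
  fun p q => U (p.1, q.2) (q.1, p.2)

/-- A family of vectors forming an orthonormal basis of `ℂ^k`. -/
def ONB {k : Type*} [Fintype k] [DecidableEq k] (e : k → k → ℂ) : Prop :=
  ∀ i j, (∑ s, star (e i s) * e j s) = if i = j then (1 : ℂ) else 0

/-- A partial isometry. -/
def IsPartialIso {m : Type*} [Fintype m] [DecidableEq m] (R : Matrix m m ℂ) : Prop :=
  R * Rᴴ * R = R

/-- Membership in `𝒰^A_{block-diag}`: `U = ∑ i, U_i ⊗ e_i f_i*` with `U_i` unitary
and `{e_i}, {f_i}` orthonormal bases of `ℂ^k`. -/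
def memUA {n k : ℕ} (U : Matrix (Fin n × Fin k) (Fin n × Fin k) ℂ) : Prop :=
  ∃ (Us : Fin k → Matrix (Fin n) (Fin n) ℂ) (e f : Fin k → Fin k → ℂ),
    (∀ i, IsUnitary (Us i)) ∧ ONB e ∧ ONB f ∧
    U = ∑ i, Us i ⊗ₖ vecMulVec (e i) (star (f i))

/-- Membership in `ℳ^A_{block-diag}`: `X = ∑ i, X_i ⊗ e_i f_i*` with arbitrary `X_i`. -/
def memMA {n k : ℕ} (X : Matrix (Fin n × Fin k) (Fin n × Fin k) ℂ) : Prop :=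
  ∃ (Xs : Fin k → Matrix (Fin n) (Fin n) ℂ) (e f : Fin k → Fin k → ℂ),
    ONB e ∧ ONB f ∧ X = ∑ i, Xs i ⊗ₖ vecMulVec (e i) (star (f i))

/-- Membership in `𝒰^B_{block-diag}`. -/
def memUB {n k : ℕ} (U : Matrix (Fin n × Fin k) (Fin n × Fin k) ℂ) : Prop :=
  ∃ (Us : Fin n → Matrix (Fin k) (Fin k) ℂ) (e f : Fin n → Fin n → ℂ),
    (∀ i, IsUnitary (Us i)) ∧ ONB e ∧ ONB f ∧
    U = ∑ i, vecMulVec (e i) (star (f i)) ⊗ₖ Us i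

/-- Membership in `ℳ^B_{block-diag}`. -/
def memMB {n k : ℕ} (X : Matrix (Fin n × Fin k) (Fin n × Fin k) ℂ) : Prop :=
  ∃ (Xs : Fin n → Matrix (Fin k) (Fin k) ℂ) (e f : Fin n → Fin n → ℂ),
    ONB e ∧ ONB f ∧ X = ∑ i, vecMulVec (e i) (star (f i)) ⊗ₖ Xs i

section Helpers

set_option linter.unusedSectionVars false

variable {n k : Type*} [Fintype n] [Fintype k] [DecidableEq n] [DecidableEq k]

lemma kron_conjTranspose (A : Matrix n n ℂ) (B : Matrix k k ℂ) :
    (A ⊗ₖ B)ᴴ = Aᴴ ⊗ₖ Bᴴ := by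
  ext ⟨i, s⟩ ⟨j, t⟩
  simp [conjTranspose_apply, kroneckerMap_apply, mul_comm]

lemma trB_kron (A : Matrix n n ℂ) (B : Matrix k k ℂ) :
    trB (A ⊗ₖ B) = B.trace • A := by
  ext i j
  simp [trB, kroneckerMap_apply, trace, Matrix.diag, Finset.mul_sum, mul_comm]

lemma channel_kron (V : Matrix n n ℂ) (W : Matrix k k ℂ) (β : Matrix k k ℂ)
    (X : Matrix n n ℂ) :
    channel (V ⊗ₖ W) β X = (W * β * Wᴴ).trace • (V * X * Vᴴ) := by
  unfold channel
  rw [kron_conjTranspose, ← mul_kronecker_mul, ← mul_kronecker_mul, trB_kron]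

/-- block of a bipartite matrix -/
def blk {n k : Type*} (U : Matrix (n × k) (n × k) ℂ) (s t : k) : Matrix n n ℂ :=
  Matrix.of fun i j => U (i, s) (j, t)

lemma trB_mul_kron_one (U : Matrix (n × k) (n × k) ℂ) (X : Matrix n n ℂ) :
    trB (U * (X ⊗ₖ (1 : Matrix k k ℂ)) * Uᴴ) =
      ∑ s, ∑ t, blk U s t * X * (blk U s t)ᴴ := by
  ext i j
  simp only [trB]
  simp only [Matrix.sum_apply]
  simp only [blk, Matrix.of_apply]
  simp only [Matrix.mul_apply]
  simp only [conjTranspose_apply, kroneckerMap_apply, one_apply]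
  simp only [mul_ite, mul_one, mul_zero, ite_mul, zero_mul]
  simp only [Fintype.sum_prod_type]
  simp only [Finset.sum_ite_eq, Finset.sum_ite_eq', Finset.mem_univ, if_true]
  simp only [Matrix.of_apply]
  refine Finset.sum_congr rfl fun s _ => ?_
  exact Finset.sum_comm

lemma channel_mixed (U : Matrix (n × k) (n × k) ℂ) (X : Matrix n n ℂ) (c : ℂ) :
    channel U (c • (1 : Matrix k k ℂ)) X =
      c • ∑ s, ∑ t, blk U s t * X * (blk U s t)ᴴ := by
  unfold channel
  rw [kronecker_smul, Matrix.mul_smul, Matrix.smul_mul, ← trB_mul_kron_one U X]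
  ext i j
  simp [trB, Finset.mul_sum]

lemma mul_vecMulVec (A : Matrix n n ℂ) (v w : n → ℂ) :
    A * vecMulVec v w = vecMulVec (A *ᵥ v) w := by
  ext i j
  simp [Matrix.mul_apply, vecMulVec_apply, mulVec, dotProduct, Finset.sum_mul, mul_assoc]

lemma vecMulVec_mul (v w : n → ℂ) (B : Matrix n n ℂ) :
    vecMulVec v w * B = vecMulVec v (w ᵥ* B) := by
  ext i j
  simp [Matrix.mul_apply, vecMulVec_apply, vecMul, dotProduct, Finset.mul_sum, mul_assoc]

lemma quadform_vecMulVec (v w y : n → ℂ) :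
    star y ⬝ᵥ (vecMulVec v w *ᵥ y) = (star y ⬝ᵥ v) * (w ⬝ᵥ y) := by
  simp [dotProduct, mulVec, vecMulVec_apply, Finset.mul_sum, Finset.sum_mul]
  rw [Finset.sum_comm]
  congr 1; ext i; congr 1; ext j; ring

lemma star_vecMul_conjTranspose (A : Matrix n n ℂ) (v : n → ℂ) :
    star v ᵥ* Aᴴ = star (A *ᵥ v) := by
  ext j
  simp [vecMul, mulVec, dotProduct, conjTranspose_apply, mul_comm]

lemma sum_mulVec' {ι : Type*} (s : Finset ι) (f : ι → Matrix n n ℂ) (v : n → ℂ) :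
    (∑ i ∈ s, f i) *ᵥ v = ∑ i ∈ s, f i *ᵥ v := by
  ext j
  simp only [mulVec, dotProduct, Matrix.sum_apply, Finset.sum_apply, Finset.sum_mul]
  exact Finset.sum_comm

lemma dotProduct_sum' {ι : Type*} (s : Finset ι) (v : n → ℂ) (f : ι → (n → ℂ)) :
    v ⬝ᵥ (∑ i ∈ s, f i) = ∑ i ∈ s, v ⬝ᵥ f i := by
  simp only [dotProduct, Finset.sum_apply, Finset.mul_sum]
  exact Finset.sum_comm

lemma dot_star (v y : n → ℂ) : star v ⬝ᵥ y = star (star y ⬝ᵥ v) := by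
  rw [dotProduct, dotProduct, star_sum]
  exact Finset.sum_congr rfl fun i _ => by simp [mul_comm]

lemma vecMulVec_posSemidef (v : n → ℂ) : (vecMulVec v (star v)).PosSemidef := by
  rw [posSemidef_iff_dotProduct_mulVec]
  constructor
  · ext i j; simp [conjTranspose_apply, vecMulVec_apply, mul_comm]
  · intro x
    rw [quadform_vecMulVec]
    have : (star v ⬝ᵥ x) = star (star x ⬝ᵥ v) := by
      simp [dotProduct, mul_comm]
    rw [this]
    exact mul_star_self_nonneg _

lemma trace_vecMulVec (v : n → ℂ) :
    (vecMulVec v (star v)).trace = ↑(∑ i, Complex.normSq (v i)) := by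
  simp [trace, Matrix.diag, vecMulVec_apply, Complex.mul_conj]

lemma posSemidef_real_smul {M : Matrix n n ℂ} (hM : M.PosSemidef) {a : ℝ} (ha : 0 ≤ a) :
    (((a : ℂ)) • M).PosSemidef := by
  rw [posSemidef_iff_dotProduct_mulVec]
  constructor
  · unfold Matrix.IsHermitian
    rw [conjTranspose_smul, hM.1]
    congr 1
    simp
  · intro x
    rw [smul_mulVec, dotProduct_smul, smul_eq_mul]
    exact mul_nonneg (by exact_mod_cast Complex.zero_le_real.mpr ha) (hM.dotProduct_mulVec_nonneg x)

lemma star_single (i : n) : star (Pi.single i 1 : n → ℂ) = Pi.single i 1 := by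
  ext a
  simp only [Pi.star_apply, Pi.single_apply]
  split <;> simp

lemma sum_mul_star_eq_zero {ι : Type*} [Fintype ι] (z : ι → ℂ)
    (h : ∑ i, z i * star (z i) = 0) : ∀ i, z i = 0 := by
  have h2 : ((∑ i, Complex.normSq (z i) : ℝ) : ℂ) = 0 := by
    push_cast
    rw [← h]
    exact Finset.sum_congr rfl fun i _ => (Complex.mul_conj (z i)).symm
  have h3 : (∑ i, Complex.normSq (z i) : ℝ) = 0 := by exact_mod_cast h2
  intro i
  have := (Finset.sum_eq_zero_iff_of_nonneg
    (fun j _ => Complex.normSq_nonneg (z j))).mp h3 i (Finset.mem_univ i)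
  exact Complex.normSq_eq_zero.mp this

lemma scalar_of_orth {M : Matrix n n ℂ} [Nonempty n]
    (h : ∀ x y : n → ℂ, star y ⬝ᵥ x = 0 → star y ⬝ᵥ (M *ᵥ x) = 0) :
    ∃ c : ℂ, M = c • 1 := by
  have hod : ∀ l j, l ≠ j → M l j = 0 := by
    intro l j hlj
    have h0 : star (Pi.single l 1 : n → ℂ) ⬝ᵥ (Pi.single j 1 : n → ℂ) = 0 := by
      simp [star_single, single_dotProduct, Pi.single_apply, Ne.symm hlj]
    have := h (Pi.single j 1) (Pi.single l 1) h0
    simpa [star_single, single_dotProduct] using this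
  have hd : ∀ i j : n, M i i = M j j := by
    intro i j
    rcases eq_or_ne i j with rfl | hij
    · rfl
    have h0 : star ((Pi.single i 1 : n → ℂ) - Pi.single j 1) ⬝ᵥ
        ((Pi.single i 1 : n → ℂ) + Pi.single j 1) = 0 := by
      simp [star_sub, star_single, sub_dotProduct, dotProduct_add, single_dotProduct,
        Pi.single_apply, hij, Ne.symm hij]
    have key := h ((Pi.single i 1 : n → ℂ) + Pi.single j 1)
      ((Pi.single i 1 : n → ℂ) - Pi.single j 1) h0
    rw [star_sub, star_single, star_single, mulVec_add, sub_dotProduct,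
      dotProduct_add, dotProduct_add] at key
    simp only [single_dotProduct, mulVec_single, one_mul, mul_one, MulOpposite.op_one, one_smul,
      col_apply] at key
    linear_combination key - hod i j hij + hod j i (Ne.symm hij)
  obtain ⟨i0⟩ := ‹Nonempty n›
  refine ⟨M i0 i0, ?_⟩
  ext i j
  rcases eq_or_ne i j with rfl | hij
  · simp [hd i i0]
  · simp [hod i j hij, one_apply, hij]

end Helpers

/-- a bipartite unitary induces a unitary conjugation channel for every
ancilla state iff it is a tensor product of unitaries. -/
theorem stmt2 (n k : ℕ) (hn : 0 < n) (hk : 0 < k)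
    (U : Matrix (Fin n × Fin k) (Fin n × Fin k) ℂ) (hU : IsUnitary U) :
    (∀ β : Matrix (Fin k) (Fin k) ℂ, IsDensity β →
      ∃ V : Matrix (Fin n) (Fin n) ℂ, IsUnitary V ∧
        ∀ ρ : Matrix (Fin n) (Fin n) ℂ, IsDensity ρ → channel U β ρ = V * ρ * Vᴴ)
    ↔ ∃ (V : Matrix (Fin n) (Fin n) ℂ) (W : Matrix (Fin k) (Fin k) ℂ),
        IsUnitary V ∧ IsUnitary W ∧ U = V ⊗ₖ W := by
  constructor
  · intro h
    have hne : Nonempty (Fin n) := ⟨⟨0, hn⟩⟩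
    have hkC : ((k : ℂ)) ≠ 0 := Nat.cast_ne_zero.mpr hk.ne'
    -- the maximally mixed ancilla state is a density matrix
    have hβ₀ : IsDensity ((k : ℂ)⁻¹ • (1 : Matrix (Fin k) (Fin k) ℂ)) := by
      constructor
      · have hcast : ((k : ℂ))⁻¹ = (((k : ℝ)⁻¹ : ℝ) : ℂ) := by push_cast; ring
        rw [hcast]
        exact posSemidef_real_smul Matrix.PosSemidef.one
          (inv_nonneg.mpr (Nat.cast_nonneg k))
      · rw [trace_smul, trace_one, smul_eq_mul, Fintype.card_fin]
        exact inv_mul_cancel₀ hkC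
    obtain ⟨V, hV, hch⟩ := h _ hβ₀
    -- the sum of Kraus terms is k • (V ⬝ ρ ⬝ Vᴴ) on every rank-one matrix
    have hSsmul : ∀ (a : ℂ) (X : Matrix (Fin n) (Fin n) ℂ),
        (∑ s, ∑ t, blk U s t * (a • X) * (blk U s t)ᴴ) =
          a • ∑ s, ∑ t, blk U s t * X * (blk U s t)ᴴ := by
      intro a X
      rw [Finset.smul_sum]
      refine Finset.sum_congr rfl fun s _ => ?_
      rw [Finset.smul_sum]
      refine Finset.sum_congr rfl fun t _ => ?_
      rw [Matrix.mul_smul, Matrix.smul_mul]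
    have hKey : ∀ w : Fin n → ℂ,
        (∑ s, ∑ t, blk U s t * vecMulVec w (star w) * (blk U s t)ᴴ) =
          (k : ℂ) • (V * vecMulVec w (star w) * Vᴴ) := by
      intro w
      by_cases hw : w = 0
      · have hz : vecMulVec w (star w) = 0 := by
          subst hw; ext i j; simp [vecMulVec_apply]
        rw [hz]
        simp
      · set r : ℝ := ∑ i, Complex.normSq (w i) with hr
        have hrpos : 0 < r := by
          have hex : ∃ i, w i ≠ 0 := by
            by_contra hc; push_neg at hc; exact hw (funext hc)
          obtain ⟨i, hi⟩ := hex
          refine Finset.sum_pos' (fun j _ => Complex.normSq_nonneg _)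
            ⟨i, Finset.mem_univ i, Complex.normSq_pos.mpr hi⟩
        set ρ : Matrix (Fin n) (Fin n) ℂ :=
          ((r⁻¹ : ℝ) : ℂ) • vecMulVec w (star w) with hρdef
        have hρ : IsDensity ρ := by
          constructor
          · exact posSemidef_real_smul (vecMulVec_posSemidef w) (inv_nonneg.mpr hrpos.le)
          · rw [hρdef, trace_smul, trace_vecMulVec, smul_eq_mul, ← hr,
              ← Complex.ofReal_mul, inv_mul_cancel₀ hrpos.ne', Complex.ofReal_one]
        have e1 : (k : ℂ)⁻¹ • (∑ s, ∑ t, blk U s t * ρ * (blk U s t)ᴴ) = V * ρ * Vᴴ := by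
          rw [← channel_mixed U ρ]
          exact hch ρ hρ
        have e2 : (∑ s, ∑ t, blk U s t * ρ * (blk U s t)ᴴ) = (k : ℂ) • (V * ρ * Vᴴ) := by
          rw [← e1, smul_smul, mul_inv_cancel₀ hkC, one_smul]
        have hwr : vecMulVec w (star w) = ((r : ℝ) : ℂ) • ρ := by
          rw [hρdef, smul_smul, ← Complex.ofReal_mul, mul_inv_cancel₀ hrpos.ne',
            Complex.ofReal_one, one_smul]
        have hVw : V * vecMulVec w (star w) * Vᴴ = ((r : ℝ) : ℂ) • (V * ρ * Vᴴ) := by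
          rw [hwr, Matrix.mul_smul, Matrix.smul_mul]
        calc (∑ s, ∑ t, blk U s t * vecMulVec w (star w) * (blk U s t)ᴴ)
            = ((r : ℝ) : ℂ) • ∑ s, ∑ t, blk U s t * ρ * (blk U s t)ᴴ := by
              rw [hwr, hSsmul]
          _ = ((r : ℝ) : ℂ) • ((k : ℂ) • (V * ρ * Vᴴ)) := by rw [e2]
          _ = (k : ℂ) • (((r : ℝ) : ℂ) • (V * ρ * Vᴴ)) := smul_comm _ _ _
          _ = (k : ℂ) • (V * vecMulVec w (star w) * Vᴴ) := by rw [hVw]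
    -- orthogonality property of the normalized blocks
    have hterm : ∀ (s t : Fin k) (x : Fin n → ℂ),
        Vᴴ * (blk U s t * vecMulVec x (star x) * (blk U s t)ᴴ) * V =
          vecMulVec ((Vᴴ * blk U s t) *ᵥ x) (star ((Vᴴ * blk U s t) *ᵥ x)) := by
      intro s t x
      have assoc : Vᴴ * (blk U s t * vecMulVec x (star x) * (blk U s t)ᴴ) * V =
          (Vᴴ * blk U s t) * vecMulVec x (star x) * ((blk U s t)ᴴ * V) := by
        noncomm_ring
      rw [assoc, mul_vecMulVec, vecMulVec_mul,
        show (blk U s t)ᴴ * V = (Vᴴ * blk U s t)ᴴ from by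
          rw [conjTranspose_mul, conjTranspose_conjTranspose],
        star_vecMul_conjTranspose]
    have hsandwich : ∀ P : Matrix (Fin n) (Fin n) ℂ, Vᴴ * (V * P * Vᴴ) * V = P := by
      intro P
      have assoc : Vᴴ * (V * P * Vᴴ) * V = (Vᴴ * V) * P * (Vᴴ * V) := by noncomm_ring
      rw [assoc, hV.2, Matrix.one_mul, Matrix.mul_one]
    have esum : ∀ x : Fin n → ℂ,
        (∑ s, ∑ t, vecMulVec ((Vᴴ * blk U s t) *ᵥ x)
            (star ((Vᴴ * blk U s t) *ᵥ x))) = (k : ℂ) • vecMulVec x (star x) := by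
      intro x
      have : (∑ s, ∑ t, vecMulVec ((Vᴴ * blk U s t) *ᵥ x)
            (star ((Vᴴ * blk U s t) *ᵥ x))) =
          Vᴴ * (∑ s, ∑ t, blk U s t * vecMulVec x (star x) * (blk U s t)ᴴ) * V := by
        rw [Matrix.mul_sum, Matrix.sum_mul]
        refine Finset.sum_congr rfl fun s _ => ?_
        rw [Matrix.mul_sum, Matrix.sum_mul]
        exact Finset.sum_congr rfl fun t _ => (hterm s t x).symm
      rw [this, hKey x, Matrix.mul_smul, Matrix.smul_mul, hsandwich]
    have horth : ∀ (s t : Fin k) (x y : Fin n → ℂ), star y ⬝ᵥ x = 0 →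
        star y ⬝ᵥ ((Vᴴ * blk U s t) *ᵥ x) = 0 := by
      intro s t x y hxy
      have q := congrArg (fun A : Matrix (Fin n) (Fin n) ℂ => star y ⬝ᵥ (A *ᵥ y)) (esum x)
      simp only [sum_mulVec', dotProduct_sum', smul_mulVec, dotProduct_smul,
        quadform_vecMulVec, smul_eq_mul] at q
      rw [hxy] at q
      simp only [star_zero, mul_zero, zero_mul] at q
      have q2 : (∑ p : Fin k × Fin k,
          (star y ⬝ᵥ ((Vᴴ * blk U p.1 p.2) *ᵥ x)) *
            star (star y ⬝ᵥ ((Vᴴ * blk U p.1 p.2) *ᵥ x))) = 0 := by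
        rw [Fintype.sum_prod_type]
        refine Eq.trans (Finset.sum_congr rfl fun s' _ =>
          Finset.sum_congr rfl fun t' _ => ?_) q
        rw [dot_star ((Vᴴ * blk U s' t') *ᵥ x) y]
      exact sum_mul_star_eq_zero _ q2 (s, t)
    -- each normalized block is scalar
    have hscal : ∀ s t : Fin k, ∃ c : ℂ, Vᴴ * blk U s t = c • 1 :=
      fun s t => scalar_of_orth (fun x y hxy => horth s t x y hxy)
    choose c hc using hscal
    have hblk : ∀ s t, blk U s t = c s t • V := by
      intro s t
      have hres : V * (Vᴴ * blk U s t) = blk U s t := by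
        rw [← Matrix.mul_assoc, hV.1, Matrix.one_mul]
      rw [← hres, hc s t, Matrix.mul_smul, Matrix.mul_one]
    have hUeq : U = V ⊗ₖ Matrix.of c := by
      ext ⟨i, s⟩ ⟨j, t⟩
      have happ : U (i, s) (j, t) = blk U s t i j := rfl
      rw [happ, hblk s t]
      simp [kroneckerMap_apply, Matrix.smul_apply, smul_eq_mul, mul_comm]
    have extract : ∀ D : Matrix (Fin k) (Fin k) ℂ,
        (1 : Matrix (Fin n) (Fin n) ℂ) ⊗ₖ D = 1 → D = 1 := by
      intro D hD
      ext s t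
      have happ := congrFun (congrFun hD (⟨0, hn⟩, s)) (⟨0, hn⟩, t)
      simpa [kroneckerMap_apply, one_apply, Prod.ext_iff] using happ
    have hC1 : Matrix.of c * (Matrix.of c)ᴴ = 1 := by
      refine extract _ ?_
      have h1 := hU.1
      rw [hUeq, kron_conjTranspose, ← mul_kronecker_mul, hV.1] at h1
      exact h1
    have hC2 : (Matrix.of c)ᴴ * Matrix.of c = 1 := by
      refine extract _ ?_
      have h1 := hU.2
      rw [hUeq, kron_conjTranspose, ← mul_kronecker_mul, hV.2] at h1
      exact h1
    exact ⟨V, Matrix.of c, hV, ⟨hC1, hC2⟩, hUeq⟩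
  · rintro ⟨V, W, hV, hW, rfl⟩
    intro β hβ
    refine ⟨V, hV, fun ρ _ => ?_⟩
    rw [channel_kron]
    have ht : (W * β * Wᴴ).trace = 1 := by
      rw [trace_mul_cycle, hW.2, Matrix.one_mul, hβ.2]
    rw [ht, one_smul]

end BipartiteUnitary
end
end

section
/- A unitary operator U on ℂ^n ⊗ ℂ^k satisfies L_{U,β}(I_n) = I_n for every density matrix β ∈ M_k^{1,+}(ℂ) if and only if it satisfies the symmetric condition with the roles of the two factors exchanged: Tr_A(U (α ⊗ I_k) U*) = I_k for every density matrix α ∈ M_n^{1,+}(ℂ), where Tr_A = Tr ⊗ id is the partial trace over the first factor. -/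
open Matrix Kronecker ComplexOrder

noncomputable section

namespace BipartiteUnitary

section Aux

variable {n k : ℕ}

lemma entryA (U : Matrix (Fin n × Fin k) (Fin n × Fin k) ℂ) (i j : Fin n) (t u : Fin k) :
    (pt U * (pt U)ᴴ) (i,t) (j,u)
      = trB (U * ((1 : Matrix (Fin n) (Fin n) ℂ) ⊗ₖ Matrix.single t u (1:ℂ)) * Uᴴ) i j := by
  simp only [trB, Matrix.mul_apply, Matrix.conjTranspose_apply, pt,
    Fintype.sum_prod_type, kroneckerMap_apply, Matrix.one_apply, Matrix.single,
    Matrix.of_apply, ite_mul, mul_ite, one_mul, mul_one, zero_mul, mul_zero,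
    Finset.sum_ite_eq, Finset.sum_ite_eq', Finset.mem_univ, if_true, ite_and]
  rw [Finset.sum_comm]
  refine Finset.sum_congr rfl fun a _ => ?_
  refine Finset.sum_congr rfl fun s _ => ?_
  simp

lemma entryB (U : Matrix (Fin n × Fin k) (Fin n × Fin k) ℂ) (a b : Fin n) (s t : Fin k) :
    ((pt U)ᴴ * pt U) (b,t) (a,s)
      = trA (U * (Matrix.single a b (1:ℂ) ⊗ₖ (1 : Matrix (Fin k) (Fin k) ℂ)) * Uᴴ) s t := by
  simp only [trA, Matrix.mul_apply, Matrix.conjTranspose_apply, pt,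
    Fintype.sum_prod_type, kroneckerMap_apply, Matrix.one_apply, Matrix.single,
    Matrix.of_apply, ite_mul, mul_ite, one_mul, mul_one, zero_mul, mul_zero,
    Finset.sum_ite_eq, Finset.sum_ite_eq', Finset.mem_univ, if_true, ite_and]
  refine Finset.sum_congr rfl fun i _ => ?_
  rw [Finset.sum_comm]
  simp [Finset.sum_ite_eq, mul_comm]


/-- The channel as a linear map in the ancilla state. -/
def Phi (U : Matrix (Fin n × Fin k) (Fin n × Fin k) ℂ) :
    Matrix (Fin k) (Fin k) ℂ →ₗ[ℂ] Matrix (Fin n) (Fin n) ℂ where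
  toFun β := trB (U * ((1 : Matrix (Fin n) (Fin n) ℂ) ⊗ₖ β) * Uᴴ)
  map_add' β γ := by
    ext i j
    simp [trB, Matrix.kronecker_add, Matrix.mul_add, Matrix.add_mul, Finset.sum_add_distrib]
  map_smul' c β := by
    ext i j
    simp [trB, Matrix.kronecker_smul, Matrix.mul_smul, Matrix.smul_mul, Finset.mul_sum]

def Psi (U : Matrix (Fin n × Fin k) (Fin n × Fin k) ℂ) :
    Matrix (Fin n) (Fin n) ℂ →ₗ[ℂ] Matrix (Fin k) (Fin k) ℂ where
  toFun α := trA (U * (α ⊗ₖ (1 : Matrix (Fin k) (Fin k) ℂ)) * Uᴴ)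
  map_add' α γ := by
    ext s t
    simp [trA, Matrix.add_kronecker, Matrix.mul_add, Matrix.add_mul, Finset.sum_add_distrib]
  map_smul' c α := by
    ext s t
    simp [trA, Matrix.smul_kronecker, Matrix.mul_smul, Matrix.smul_mul, Finset.mul_sum]

lemma density_vecMulVec (v : Fin k → ℂ) (hv : ∑ x, star (v x) * v x = 1) :
    IsDensity (vecMulVec v (star v)) := by
  constructor
  · refine Matrix.PosSemidef.of_dotProduct_mulVec_nonneg ?_ ?_
    · ext i j
      simp [vecMulVec, Matrix.conjTranspose_apply, mul_comm]
    · intro x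
      have key : star x ⬝ᵥ (vecMulVec v (star v) *ᵥ x)
          = star (∑ j, star (v j) * x j) * (∑ j, star (v j) * x j) := by
        simp only [dotProduct, mulVec, vecMulVec, Matrix.of_apply, Pi.star_apply,
          star_sum, star_mul', star_star, Finset.mul_sum]
        rw [Finset.sum_comm]
        refine Finset.sum_congr rfl fun i _ => ?_
        rw [Finset.sum_mul]
        refine Finset.sum_congr rfl fun j _ => ?_
        ring
      rw [key]
      exact star_mul_self_nonneg _
  · simpa [Matrix.trace, Matrix.diag, vecMulVec, mul_comm] using hv

lemma vecMulVec_mem_span (v : Fin k → ℂ) :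
    vecMulVec v (star v) ∈ Submodule.span ℂ {γ : Matrix (Fin k) (Fin k) ℂ | IsDensity γ} := by
  by_cases hv : v = 0
  · have : vecMulVec v (star v) = 0 := by ext i j; simp [hv, vecMulVec]
    rw [this]; exact Submodule.zero_mem _
  · set r : ℝ := ∑ x, Complex.normSq (v x) with hr
    have hc : (∑ x, star (v x) * v x) = (r : ℂ) := by
      rw [hr]; push_cast
      refine Finset.sum_congr rfl fun x _ => ?_
      rw [Complex.star_def, ← Complex.normSq_eq_conj_mul_self]
    have hrpos : 0 < r := by
      have hne : ∃ x, v x ≠ 0 := by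
        by_contra h; push_neg at h; exact hv (funext h)
      obtain ⟨x0, hx0⟩ := hne
      refine Finset.sum_pos' (fun x _ => Complex.normSq_nonneg _) ⟨x0, Finset.mem_univ _, ?_⟩
      exact Complex.normSq_pos.mpr hx0
    set s : ℝ := Real.sqrt r with hs
    have hs2 : s * s = r := Real.mul_self_sqrt hrpos.le
    have hsne : (s : ℂ) ≠ 0 := by
      simp only [ne_eq, Complex.ofReal_eq_zero]
      exact (Real.sqrt_pos.mpr hrpos).ne'
    have hrs : (r : ℂ) = (s : ℂ) * (s : ℂ) := by
      rw [← Complex.ofReal_mul, hs2]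
    set w : Fin k → ℂ := fun x => ((s : ℂ))⁻¹ * v x with hw
    have hwd : IsDensity (vecMulVec w (star w)) := by
      apply density_vecMulVec
      have h1 : ∑ x, star (w x) * w x = ((s:ℂ))⁻¹ * ((s:ℂ))⁻¹ * ∑ x, star (v x) * v x := by
        rw [Finset.mul_sum]
        refine Finset.sum_congr rfl fun x _ => ?_
        simp only [hw, star_mul', Complex.star_def, Complex.conj_ofReal, map_inv₀]
        ring
      rw [h1, hc, hrs]
      field_simp
    have hdecomp : vecMulVec v (star v) = (r : ℂ) • vecMulVec w (star w) := by
      ext i j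
      simp only [vecMulVec, Matrix.of_apply, Matrix.smul_apply, smul_eq_mul, hw,
        Pi.star_apply, star_mul', Complex.star_def, Complex.conj_ofReal, map_inv₀, hrs]
      field_simp
      try ring
    rw [hdecomp]
    exact Submodule.smul_mem _ _ (Submodule.subset_span hwd)

lemma stdBasis_mem_span (t u : Fin k) :
    Matrix.single t u (1:ℂ) ∈ Submodule.span ℂ {γ : Matrix (Fin k) (Fin k) ℂ | IsDensity γ} := by
  set vm : Fin 4 → Fin k → ℂ :=
    fun m x => (Pi.single t 1 : Fin k → ℂ) x + Complex.I ^ (m:ℕ) * (Pi.single u 1 : Fin k → ℂ) x with hvm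
  have key : Matrix.single t u (1:ℂ) = (4:ℂ)⁻¹ •
      ∑ m : Fin 4, Complex.I ^ (m:ℕ) • vecMulVec (vm m) (star (vm m)) := by
    ext x y
    simp only [Fin.sum_univ_four, Matrix.smul_apply, Matrix.sum_apply,
      vecMulVec, Matrix.of_apply, Pi.star_apply, hvm, star_add, star_mul', star_one,
      star_pow, Complex.star_def, Complex.conj_I, Pi.single_apply, Matrix.single,
      smul_eq_mul, Fin.isValue, apply_ite (starRingEnd ℂ), _root_.map_one, _root_.map_zero]
    have h0 : ((0 : Fin 4) : ℕ) = 0 := rfl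
    have h1 : ((1 : Fin 4) : ℕ) = 1 := rfl
    have h2 : ((2 : Fin 4) : ℕ) = 2 := rfl
    have h3 : ((3 : Fin 4) : ℕ) = 3 := rfl
    rw [h0, h1, h2, h3]
    have hI3 : Complex.I ^ 3 = -Complex.I := by
      rw [pow_succ, Complex.I_sq]; ring
    have hmI3 : (-Complex.I) ^ 3 = Complex.I := by
      rw [Odd.neg_pow ⟨1, by norm_num⟩, hI3, neg_neg]
    simp only [pow_zero, pow_one, Complex.I_sq, hI3, hmI3, neg_sq, neg_neg,
      neg_mul, mul_neg, one_mul, mul_one]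
    split_ifs <;> simp_all <;> split_ifs <;>
      (first
        | ring1
        | (norm_num [Complex.I_sq]; done)
        | (ring_nf; norm_num [Complex.I_sq]; done)
        | (exfalso; subst_vars; simp_all))
  rw [key]
  exact Submodule.smul_mem _ _ (Submodule.sum_mem _ fun m _ =>
    Submodule.smul_mem _ _ (vecMulVec_mem_span _))

lemma mem_span_density (β : Matrix (Fin k) (Fin k) ℂ) :
    β ∈ Submodule.span ℂ {γ : Matrix (Fin k) (Fin k) ℂ | IsDensity γ} := by
  rw [matrix_eq_sum_single β]
  refine Submodule.sum_mem _ fun t _ => Submodule.sum_mem _ fun u _ => ?_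
  have : Matrix.single t u (β t u) = β t u • Matrix.single t u 1 := by
    rw [smul_single, smul_eq_mul, mul_one]
  rw [this]
  exact Submodule.smul_mem _ _ (stdBasis_mem_span t u)


lemma Phi_std_eq (U : Matrix (Fin n × Fin k) (Fin n × Fin k) ℂ) (t u : Fin k) :
    trB (U * ((1 : Matrix (Fin n) (Fin n) ℂ) ⊗ₖ Matrix.single t u (1:ℂ)) * Uᴴ)
      = Phi U (Matrix.single t u 1) := rfl

lemma Psi_std_eq (U : Matrix (Fin n × Fin k) (Fin n × Fin k) ℂ) (a b : Fin n) :
    trA (U * (Matrix.single a b (1:ℂ) ⊗ₖ (1 : Matrix (Fin k) (Fin k) ℂ)) * Uᴴ)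
      = Psi U (Matrix.single a b 1) := rfl

lemma trace_std (t u : Fin k) :
    (Matrix.single t u (1:ℂ)).trace = if t = u then 1 else 0 := by
  simp [Matrix.trace, Matrix.diag, Matrix.single, ite_and, Finset.sum_ite_eq, eq_comm]

lemma condA_iff (U : Matrix (Fin n × Fin k) (Fin n × Fin k) ℂ) :
    (∀ β : Matrix (Fin k) (Fin k) ℂ, IsDensity β → channel U β 1 = 1)
      ↔ pt U * (pt U)ᴴ = 1 := by
  constructor
  · intro h
    have hall : ∀ β : Matrix (Fin k) (Fin k) ℂ, Phi U β = β.trace • 1 := by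
      intro β
      induction mem_span_density β using Submodule.span_induction with
      | mem γ hγ =>
        have h1 : Phi U γ = 1 := h γ hγ
        rw [h1, hγ.2, one_smul]
      | zero => simp
      | add x y hx hy ihx ihy => rw [map_add, ihx, ihy, Matrix.trace_add, add_smul]
      | smul a x hx ihx => simp [_root_.map_smul, ihx, Matrix.trace_smul, smul_smul]
    ext ⟨i, t⟩ ⟨j, u⟩
    rw [entryA, Phi_std_eq, hall, trace_std]
    simp only [Matrix.smul_apply, Matrix.one_apply, Prod.mk.injEq, ite_and, smul_eq_mul]
    split_ifs <;> simp_all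
  · intro h β hβ
    have hstd : ∀ t u : Fin k,
        Phi U (Matrix.single t u (1:ℂ)) = (if t = u then (1:ℂ) else 0) • 1 := by
      intro t u
      ext i j
      rw [← Phi_std_eq, ← entryA, h]
      simp only [Matrix.smul_apply, Matrix.one_apply, Prod.mk.injEq, ite_and, smul_eq_mul]
      split_ifs <;> simp_all
    show Phi U β = 1
    have expand : Phi U β = ∑ t, ∑ u, β t u • Phi U (Matrix.single t u 1) := by
      conv_lhs => rw [matrix_eq_sum_single β]
      rw [map_sum]
      refine Finset.sum_congr rfl fun t _ => ?_
      rw [map_sum]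
      refine Finset.sum_congr rfl fun u _ => ?_
      rw [show Matrix.single t u (β t u) = β t u • Matrix.single t u 1 from by
        rw [smul_single, smul_eq_mul, mul_one], _root_.map_smul]
    rw [expand]
    simp only [hstd, ite_smul, one_smul, zero_smul, smul_ite, smul_zero,
      Finset.sum_ite_eq, Finset.mem_univ, if_true]
    rw [← Finset.sum_smul]
    have htr : (∑ t, β t t) = β.trace := rfl
    rw [htr, hβ.2, one_smul]

lemma condB_iff (U : Matrix (Fin n × Fin k) (Fin n × Fin k) ℂ) :
    (∀ α : Matrix (Fin n) (Fin n) ℂ, IsDensity α →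
        trA (U * (α ⊗ₖ (1 : Matrix (Fin k) (Fin k) ℂ)) * Uᴴ) = 1)
      ↔ (pt U)ᴴ * pt U = 1 := by
  constructor
  · intro h
    have hall : ∀ α : Matrix (Fin n) (Fin n) ℂ, Psi U α = α.trace • 1 := by
      intro α
      induction mem_span_density α using Submodule.span_induction with
      | mem γ hγ =>
        have h1 : Psi U γ = 1 := h γ hγ
        rw [h1, hγ.2, one_smul]
      | zero => simp
      | add x y hx hy ihx ihy => rw [map_add, ihx, ihy, Matrix.trace_add, add_smul]
      | smul a x hx ihx => simp [_root_.map_smul, ihx, Matrix.trace_smul, smul_smul]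
    ext ⟨b, t⟩ ⟨a, s⟩
    rw [entryB, Psi_std_eq, hall, trace_std]
    simp only [Matrix.smul_apply, Matrix.one_apply, Prod.mk.injEq, ite_and, smul_eq_mul]
    split_ifs <;> simp_all
  · intro h α hα
    have hstd : ∀ a b : Fin n,
        Psi U (Matrix.single a b (1:ℂ)) = (if a = b then (1:ℂ) else 0) • 1 := by
      intro a b
      ext s t
      rw [← Psi_std_eq, ← entryB, h]
      simp only [Matrix.smul_apply, Matrix.one_apply, Prod.mk.injEq, ite_and, smul_eq_mul]
      split_ifs <;> simp_all
    show Psi U α = 1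
    have expand : Psi U α = ∑ a, ∑ b, α a b • Psi U (Matrix.single a b 1) := by
      conv_lhs => rw [matrix_eq_sum_single α]
      rw [map_sum]
      refine Finset.sum_congr rfl fun a _ => ?_
      rw [map_sum]
      refine Finset.sum_congr rfl fun b _ => ?_
      rw [show Matrix.single a b (α a b) = α a b • Matrix.single a b 1 from by
        rw [smul_single, smul_eq_mul, mul_one], _root_.map_smul]
    rw [expand]
    simp only [hstd, ite_smul, one_smul, zero_smul, smul_ite, smul_zero,
      Finset.sum_ite_eq, Finset.mem_univ, if_true]
    rw [← Finset.sum_smul]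
    have htr : (∑ a, α a a) = α.trace := rfl
    rw [htr, hα.2, one_smul]

end Aux

/-- a bipartite unitary yields unital channels for all ancilla states
iff the same holds with the roles of the two tensor factors exchanged. -/
theorem stmt7 (n k : ℕ) (hn : 0 < n) (hk : 0 < k)
    (U : Matrix (Fin n × Fin k) (Fin n × Fin k) ℂ) (hU : IsUnitary U) :
    (∀ β : Matrix (Fin k) (Fin k) ℂ, IsDensity β → channel U β 1 = 1)
    ↔ (∀ α : Matrix (Fin n) (Fin n) ℂ, IsDensity α →
        trA (U * (α ⊗ₖ (1 : Matrix (Fin k) (Fin k) ℂ)) * Uᴴ) = 1) := by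
  rw [condA_iff U, condB_iff U]
  exact mul_eq_one_comm

end BipartiteUnitary
end
end
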